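/- Assume α₁, α₂, α₃ > 0. Let x : [0,∞) → ℝ³ be differentiable with x'(t) = b(x(t)) for all t ≥ 0, x(0) ∈ ℝ³₊ ∖ {0} where ℝ³₊ = {x : x₁ ≥ 0, x₂ ≥ 0, x₃ ≥ 0}. Then the ω-limit set of the solution — the set of all p ∈ ℝ³ for which there is a sequence tₙ → ∞ with x(tₙ) → p — is contained in S²₊ = {x ∈ ℝ³₊ : x₁²+x₂²+x₃² = 1}. -/

import Mathlib

open scoped RealInnerProductSpace

/-- The cubic Kolmogorov vector field on `ℝ³` (modelled as `EuclideanSpace ℝ (Fin 3)`):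
`b(x)₁ = x₁(α₁ − α₁x₁² − (α₁+α₂+d₁)x₂² + d₂x₃²)`,
`b(x)₂ = x₂(α₂ + d₁x₁² − α₂x₂² − (α₂+α₃+d₃)x₃²)`,
`b(x)₃ = x₃(α₃ − (α₃+α₁+d₂)x₁² + d₃x₂² − α₃x₃²)`. -/
noncomputable def bVF (α₁ α₂ α₃ d₁ d₂ d₃ : ℝ) (x : EuclideanSpace ℝ (Fin 3)) :
    EuclideanSpace ℝ (Fin 3) :=
  (WithLp.equiv 2 (Fin 3 → ℝ)).symm
    ![x 0 * (α₁ - α₁ * (x 0)^2 - (α₁ + α₂ + d₁) * (x 1)^2 + d₂ * (x 2)^2),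
      x 1 * (α₂ + d₁ * (x 0)^2 - α₂ * (x 1)^2 - (α₂ + α₃ + d₃) * (x 2)^2),
      x 2 * (α₃ - (α₃ + α₁ + d₂) * (x 0)^2 + d₃ * (x 1)^2 - α₃ * (x 2)^2)]

/-- Solution formula for a scalar linear ODE `y' = g·y` on `[0,∞)`. -/
lemma linODE_aux (y g : ℝ → ℝ) (hg : ∀ t, 0 ≤ t → ContinuousAt g t)
    (hy : ∀ t, 0 ≤ t → HasDerivAt y (g t * y t) t) :
    ∀ T, 0 ≤ T → y T = y 0 * Real.exp (∫ s in (0:ℝ)..T, g s) := by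
  have hgc : ContinuousOn g (Set.Ici 0) := fun t ht => (hg t ht).continuousWithinAt
  have hint : ∀ t, 0 ≤ t → IntervalIntegrable g MeasureTheory.volume 0 t := fun t ht =>
    (hgc.mono (by rw [Set.uIcc_of_le ht]; exact Set.Icc_subset_Ici_self)).intervalIntegrable
  set G : ℝ → ℝ := fun t => ∫ s in (0:ℝ)..t, g s with hGdef
  have hGW : ∀ t, 0 ≤ t → HasDerivWithinAt G (g t) (Set.Ici t) t := by
    intro t ht
    exact intervalIntegral.integral_hasDerivWithinAt_right (hint t ht)
      (ContinuousOn.stronglyMeasurableAtFilter_nhdsWithin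
        (hgc.mono (fun s hs => le_trans ht (le_of_lt hs))) measurableSet_Ioi t)
      ((hg t ht).continuousWithinAt)
  have hGA : ∀ t, 0 < t → HasDerivAt G (g t) t := by
    intro t ht
    exact intervalIntegral.integral_hasDerivAt_right (hint t ht.le)
      (ContinuousAt.stronglyMeasurableAtFilter isOpen_Ioi (fun s hs => hg s (le_of_lt hs)) t ht)
      (hg t ht.le)
  intro T hT
  set h : ℝ → ℝ := fun t => y t * Real.exp (-(G t)) with hhdef
  have hcont : ContinuousOn h (Set.Icc 0 T) := by
    intro t ht
    have hyc : ContinuousWithinAt y (Set.Icc 0 T) t := ((hy t ht.1).continuousAt).continuousWithinAt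
    have hGc : ContinuousWithinAt G (Set.Icc 0 T) t := by
      by_cases h0 : 0 < t
      · exact ((hGA t h0).continuousAt).continuousWithinAt
      · have ht0 : t = 0 := le_antisymm (not_lt.1 h0) ht.1
        subst ht0
        exact ((hGW 0 le_rfl).continuousWithinAt).mono (fun s hs => hs.1)
    exact hyc.mul (Real.continuous_exp.continuousAt.comp_continuousWithinAt hGc.neg)
  have hder : ∀ t ∈ Set.Ico 0 T, HasDerivWithinAt h 0 (Set.Ici t) t := by
    intro t ht
    have h1 := (hy t ht.1).hasDerivWithinAt (s := Set.Ici t)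
    have h2 : HasDerivWithinAt (fun t => Real.exp (-(G t)))
        (Real.exp (-(G t)) * (-(g t))) (Set.Ici t) t := ((hGW t ht.1).neg).exp
    have h3 := h1.mul h2
    exact h3.congr_deriv (by ring)
  have key := constant_of_has_deriv_right_zero hcont hder T (Set.right_mem_Icc.2 hT)
  have hG0 : G 0 = 0 := intervalIntegral.integral_same
  have heq : y T * Real.exp (-(G T)) = y 0 := by simpa [hhdef, hG0] using key
  calc y T = y T * Real.exp (-(G T)) * Real.exp (G T) := by
        rw [mul_assoc, ← Real.exp_add]; simp
    _ = y 0 * Real.exp (G T) := by rw [heq]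

/-- If `αᵢ > 0` and `x(0) ∈ ℝ³₊ \\ {0}`, the ω-limit set of the solution is contained
in `S²₊ = {p ∈ ℝ³₊ : p₁²+p₂²+p₃² = 1}`. -/
theorem omega_limit_in_sphere_octant (α₁ α₂ α₃ d₁ d₂ d₃ : ℝ)
    (hα₁ : 0 < α₁) (hα₂ : 0 < α₂) (hα₃ : 0 < α₃)
    (x : ℝ → EuclideanSpace ℝ (Fin 3))
    (hx : ∀ t : ℝ, 0 ≤ t → HasDerivAt x (bVF α₁ α₂ α₃ d₁ d₂ d₃ (x t)) t)
    (hoct : ∀ i, 0 ≤ x 0 i) (h0 : x 0 ≠ 0) :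
    ∀ p : EuclideanSpace ℝ (Fin 3),
      (∃ u : ℕ → ℝ, Filter.Tendsto u Filter.atTop Filter.atTop ∧
        Filter.Tendsto (fun n => x (u n)) Filter.atTop (nhds p)) →
      ((∀ i, 0 ≤ p i) ∧ (p 0) ^ 2 + (p 1) ^ 2 + (p 2) ^ 2 = 1) := by
  classical
  have hcomp : ∀ (i : Fin 3) (t : ℝ), 0 ≤ t →
      HasDerivAt (fun s => x s i) (bVF α₁ α₂ α₃ d₁ d₂ d₃ (x t) i) t := fun i t ht => by
    exact (EuclideanSpace.proj (𝕜 := ℝ) i).hasFDerivAt.comp_hasDerivAt t (hx t ht)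
  have hxc : ∀ (i : Fin 3) (t : ℝ), 0 ≤ t → ContinuousAt (fun s => x s i) t :=
    fun i t ht => (hcomp i t ht).continuousAt
  have hb0 : ∀ v : EuclideanSpace ℝ (Fin 3), bVF α₁ α₂ α₃ d₁ d₂ d₃ v 0 =
      v 0 * (α₁ - α₁ * (v 0)^2 - (α₁ + α₂ + d₁) * (v 1)^2 + d₂ * (v 2)^2) := fun v => by
    simp [bVF]
  have hb1 : ∀ v : EuclideanSpace ℝ (Fin 3), bVF α₁ α₂ α₃ d₁ d₂ d₃ v 1 =
      v 1 * (α₂ + d₁ * (v 0)^2 - α₂ * (v 1)^2 - (α₂ + α₃ + d₃) * (v 2)^2) := fun v => by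
    simp [bVF]
  have hb2 : ∀ v : EuclideanSpace ℝ (Fin 3), bVF α₁ α₂ α₃ d₁ d₂ d₃ v 2 =
      v 2 * (α₃ - (α₃ + α₁ + d₂) * (v 0)^2 + d₃ * (v 1)^2 - α₃ * (v 2)^2) := fun v => by
    simp [bVF]
  -- nonnegativity of components forward in time
  have hnn0 : ∀ t, 0 ≤ t → 0 ≤ x t 0 := by
    have := linODE_aux (fun s => x s 0)
      (fun s => α₁ - α₁ * (x s 0)^2 - (α₁ + α₂ + d₁) * (x s 1)^2 + d₂ * (x s 2)^2)
      (fun t ht => ((continuousAt_const.sub (continuousAt_const.mul ((hxc 0 t ht).pow 2))).sub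
        (continuousAt_const.mul ((hxc 1 t ht).pow 2))).add
        (continuousAt_const.mul ((hxc 2 t ht).pow 2)))
      (fun t ht => by
        have h := hcomp 0 t ht; rw [hb0] at h
        simpa [mul_comm] using h)
    intro t ht
    have h := this t ht
    simp only [] at h
    rw [h]
    exact mul_nonneg (hoct 0) (Real.exp_nonneg _)
  have hnn1 : ∀ t, 0 ≤ t → 0 ≤ x t 1 := by
    have := linODE_aux (fun s => x s 1)
      (fun s => α₂ + d₁ * (x s 0)^2 - α₂ * (x s 1)^2 - (α₂ + α₃ + d₃) * (x s 2)^2)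
      (fun t ht => ((continuousAt_const.add (continuousAt_const.mul ((hxc 0 t ht).pow 2))).sub
        (continuousAt_const.mul ((hxc 1 t ht).pow 2))).sub
        (continuousAt_const.mul ((hxc 2 t ht).pow 2)))
      (fun t ht => by
        have h := hcomp 1 t ht; rw [hb1] at h
        simpa [mul_comm] using h)
    intro t ht
    have h := this t ht
    simp only [] at h
    rw [h]
    exact mul_nonneg (hoct 1) (Real.exp_nonneg _)
  have hnn2 : ∀ t, 0 ≤ t → 0 ≤ x t 2 := by
    have := linODE_aux (fun s => x s 2)
      (fun s => α₃ - (α₃ + α₁ + d₂) * (x s 0)^2 + d₃ * (x s 1)^2 - α₃ * (x s 2)^2)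
      (fun t ht => (((continuousAt_const.sub (continuousAt_const.mul ((hxc 0 t ht).pow 2))).add
        (continuousAt_const.mul ((hxc 1 t ht).pow 2))).sub
        (continuousAt_const.mul ((hxc 2 t ht).pow 2))))
      (fun t ht => by
        have h := hcomp 2 t ht; rw [hb2] at h
        simpa [mul_comm] using h)
    intro t ht
    have h := this t ht
    simp only [] at h
    rw [h]
    exact mul_nonneg (hoct 2) (Real.exp_nonneg _)
  -- the squared norm and its differential equation
  set ρ : ℝ → ℝ := fun t => (x t 0)^2 + (x t 1)^2 + (x t 2)^2 with hρdef
  set c : ℝ → ℝ := fun t => 2 * (α₁ * (x t 0)^2 + α₂ * (x t 1)^2 + α₃ * (x t 2)^2) with hcdef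
  have hρt : ∀ t, ρ t = (x t 0)^2 + (x t 1)^2 + (x t 2)^2 := fun _ => rfl
  have hct : ∀ t, c t = 2 * (α₁ * (x t 0)^2 + α₂ * (x t 1)^2 + α₃ * (x t 2)^2) := fun _ => rfl
  have hcc : ∀ t, 0 ≤ t → ContinuousAt c t := fun t ht =>
    continuousAt_const.mul (((continuousAt_const.mul ((hxc 0 t ht).pow 2)).add
      (continuousAt_const.mul ((hxc 1 t ht).pow 2))).add
      (continuousAt_const.mul ((hxc 2 t ht).pow 2)))
  have hρder : ∀ t, 0 ≤ t → HasDerivAt (fun s => 1 - ρ s) (-(c t) * (1 - ρ t)) t := by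
    intro t ht
    have h0' := hcomp 0 t ht; rw [hb0] at h0'
    have h1' := hcomp 1 t ht; rw [hb1] at h1'
    have h2' := hcomp 2 t ht; rw [hb2] at h2'
    have hρ' := (((h0'.pow 2).add (h1'.pow 2)).add (h2'.pow 2)).const_sub 1
    refine hρ'.congr_deriv ?_
    rw [hct, hρt]
    push_cast
    ring
  have hρform : ∀ T, 0 ≤ T → 1 - ρ T = (1 - ρ 0) * Real.exp (∫ s in (0:ℝ)..T, -(c s)) :=
    linODE_aux (fun t => 1 - ρ t) (fun t => -(c t)) (fun t ht => (hcc t ht).neg) hρder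
  set m : ℝ := min α₁ (min α₂ α₃) with hmdef
  have hm : 0 < m := lt_min hα₁ (lt_min hα₂ hα₃)
  have hρ0pos : 0 < ρ 0 := by
    by_contra hle
    push_neg at hle
    rw [hρt] at hle
    apply h0
    have e0 : x 0 0 = 0 := by
      have : (x 0 0)^2 = 0 := le_antisymm (by nlinarith [sq_nonneg (x 0 1), sq_nonneg (x 0 2)])
        (sq_nonneg _)
      exact (pow_eq_zero_iff two_ne_zero).1 this
    have e1 : x 0 1 = 0 := by
      have : (x 0 1)^2 = 0 := le_antisymm (by nlinarith [sq_nonneg (x 0 0), sq_nonneg (x 0 2)])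
        (sq_nonneg _)
      exact (pow_eq_zero_iff two_ne_zero).1 this
    have e2 : x 0 2 = 0 := by
      have : (x 0 2)^2 = 0 := le_antisymm (by nlinarith [sq_nonneg (x 0 0), sq_nonneg (x 0 1)])
        (sq_nonneg _)
      exact (pow_eq_zero_iff two_ne_zero).1 this
    ext i
    fin_cases i <;> simp [e0, e1, e2]
  set r : ℝ := min (ρ 0) 1 with hrdef
  have hr : 0 < r := lt_min hρ0pos one_pos
  have hccOn : ContinuousOn c (Set.Ici 0) := fun t ht => (hcc t ht).continuousWithinAt
  have hcint : ∀ t, 0 ≤ t → IntervalIntegrable c MeasureTheory.volume 0 t := fun t ht =>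
    (hccOn.mono (by rw [Set.uIcc_of_le ht]; exact Set.Icc_subset_Ici_self)).intervalIntegrable
  have hE1 : ∀ t, 0 ≤ t → Real.exp (∫ s in (0:ℝ)..t, -(c s)) ≤ 1 := by
    intro t ht
    rw [intervalIntegral.integral_neg, Real.exp_le_one_iff, neg_nonpos]
    refine intervalIntegral.integral_nonneg ht fun s hs => ?_
    rw [hct]
    positivity
  have hρlow : ∀ t, 0 ≤ t → r ≤ ρ t := by
    intro t ht
    have hf := hρform t ht
    have hEpos : (0:ℝ) < Real.exp (∫ s in (0:ℝ)..t, -(c s)) := Real.exp_pos _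
    rcases le_total (ρ 0) 1 with h1 | h1
    · have h2 : 1 - ρ t ≤ 1 - ρ 0 := by
        rw [hf]; nlinarith [hE1 t ht]
      calc r ≤ ρ 0 := min_le_left _ _
        _ ≤ ρ t := by linarith
    · have h2 : 1 - ρ t ≤ 0 := by
        rw [hf]; nlinarith
      calc r ≤ 1 := min_le_right _ _
        _ ≤ ρ t := by linarith
  have hclow : ∀ s, 0 ≤ s → 2 * m * r ≤ c s := by
    intro s hs
    have h1 := hρlow s hs
    rw [hρt] at h1
    have hm1 : m ≤ α₁ := min_le_left _ _
    have hm2 : m ≤ α₂ := le_trans (min_le_right _ _) (min_le_left _ _)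
    have hm3 : m ≤ α₃ := le_trans (min_le_right _ _) (min_le_right _ _)
    rw [hct]
    nlinarith [mul_nonneg (sub_nonneg.2 hm1) (sq_nonneg (x s 0)),
      mul_nonneg (sub_nonneg.2 hm2) (sq_nonneg (x s 1)),
      mul_nonneg (sub_nonneg.2 hm3) (sq_nonneg (x s 2)), hm.le, hr.le]
  have hbound : ∀ t, 0 ≤ t → |1 - ρ t| ≤ |1 - ρ 0| * Real.exp (-(2 * m * r) * t) := by
    intro t ht
    have hf := hρform t ht
    have hIneg : (∫ s in (0:ℝ)..t, -(c s)) ≤ -(2 * m * r) * t := by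
      have hmono := intervalIntegral.integral_mono_on ht (hcint t ht).neg
        (intervalIntegrable_const (c := -(2 * m * r))) (fun s hs => neg_le_neg (hclow s hs.1))
      rw [intervalIntegral.integral_const, smul_eq_mul, sub_zero] at hmono
      calc (∫ s in (0:ℝ)..t, -(c s)) ≤ t * -(2 * m * r) := hmono
        _ = -(2 * m * r) * t := by ring
    rw [hf, abs_mul, abs_of_pos (Real.exp_pos _)]
    exact mul_le_mul_of_nonneg_left (Real.exp_le_exp.2 hIneg) (abs_nonneg _)
  -- conclusion
  rintro p ⟨u, hu, hconv⟩
  have htend : ∀ i : Fin 3, Filter.Tendsto (fun n => x (u n) i) Filter.atTop (nhds (p i)) := by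
    intro i
    exact ((EuclideanSpace.proj (𝕜 := ℝ) i).continuous.tendsto p).comp hconv
  have hev : ∀ᶠ n in Filter.atTop, 0 ≤ u n := hu.eventually_ge_atTop 0
  constructor
  · intro i
    refine ge_of_tendsto (htend i) ?_
    filter_upwards [hev] with n hn
    fin_cases i
    exacts [hnn0 (u n) hn, hnn1 (u n) hn, hnn2 (u n) hn]
  · have hρp : Filter.Tendsto (fun n => ρ (u n)) Filter.atTop
        (nhds ((p 0)^2 + (p 1)^2 + (p 2)^2)) :=
      (((htend 0).pow 2).add ((htend 1).pow 2)).add ((htend 2).pow 2)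
    have hzero : Filter.Tendsto (fun n => 1 - ρ (u n)) Filter.atTop (nhds 0) := by
      apply squeeze_zero_norm' (a := fun n => |1 - ρ 0| * Real.exp (-(2 * m * r) * u n))
      · filter_upwards [hev] with n hn
        simpa [Real.norm_eq_abs] using hbound (u n) hn
      · have h2 : Filter.Tendsto (fun n => (2 * m * r) * u n) Filter.atTop Filter.atTop :=
          hu.const_mul_atTop (by positivity)
        have h4 := Real.tendsto_exp_atBot.comp (Filter.tendsto_neg_atTop_atBot.comp h2)
        have h5 := h4.const_mul (|1 - ρ 0|)
        simpa [neg_mul, Function.comp] using h5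
    have hfin := tendsto_nhds_unique (tendsto_const_nhds.sub hρp) hzero
    linarith
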